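/- Flux connectivity theorem (matrix form): under the setup of the connectivity theorem, let v̂(e) = v(e, S(e)). Then (∂v̂/∂e)(∂v/∂e)⁻¹(∂v/∂S) = 0 (the n×m zero matrix), where ∂v/∂e and ∂v/∂S on the left treat S as independent and are evaluated at (e, S(e)). -/

import Mathlib

open Matrix

/-- Flux connectivity theorem in matrix form:
`(∂v̂/∂e)(∂v/∂e)⁻¹(∂v/∂S) = 0` where `v̂(e) = v(e, S(e))`. -/
lemma clm_eq_sum {n : ℕ} {E : Type*} [NormedAddCommGroup E] [NormedSpace ℝ E]
    (L : (Fin n → ℝ) →L[ℝ] E) (u : Fin n → ℝ) :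
    L u = ∑ k, u k • L (Pi.single k 1) := by
  have hu : u = ∑ k, u k • (Pi.single k 1 : Fin n → ℝ) := by
    funext j
    simp [Finset.sum_apply, Pi.single_apply]
  conv_lhs => rw [hu]
  simp [map_sum]

lemma matrix_key {n m : ℕ} (A D : Matrix (Fin n) (Fin n) ℝ) (B : Matrix (Fin n) (Fin m) ℝ)
    (C : Matrix (Fin m) (Fin n) ℝ) (P : Matrix (Fin m) (Fin n) ℝ)
    (hD : D = A + B * P) (hCD : C * D = 0) (hCB : IsUnit (C * B)) (hA : IsUnit A) :
    D * A⁻¹ * B = 0 := by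
  have hA' : A * A⁻¹ = 1 := Matrix.mul_nonsing_inv A ((Matrix.isUnit_iff_isUnit_det A).mp hA)
  have hCB' : (C * B)⁻¹ * (C * B) = 1 :=
    Matrix.nonsing_inv_mul _ ((Matrix.isUnit_iff_isUnit_det _).mp hCB)
  have h1 : C * A + C * B * P = 0 := by
    rw [hD, Matrix.mul_add, ← Matrix.mul_assoc] at hCD
    exact hCD
  have h2 : C * B * P = -(C * A) := eq_neg_of_add_eq_zero_right h1
  have hP : P = -((C * B)⁻¹ * (C * A)) := by
    calc P = ((C * B)⁻¹ * (C * B)) * P := by rw [hCB', Matrix.one_mul]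
    _ = (C * B)⁻¹ * (C * B * P) := by rw [Matrix.mul_assoc]
    _ = -((C * B)⁻¹ * (C * A)) := by rw [h2, Matrix.mul_neg]
  rw [hD, hP]
  calc (A + B * -((C * B)⁻¹ * (C * A))) * A⁻¹ * B
      = A * A⁻¹ * B + -(B * ((C * B)⁻¹ * (C * (A * (A⁻¹ * B))))) := by
        simp only [Matrix.add_mul, Matrix.mul_neg, Matrix.neg_mul, Matrix.mul_assoc]
    _ = B + -(B * ((C * B)⁻¹ * (C * B))) := by
        rw [hA', Matrix.one_mul, ← Matrix.mul_assoc A A⁻¹ B, hA', Matrix.one_mul]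
    _ = 0 := by rw [hCB', Matrix.mul_one]; simp

theorem flux_connectivity {n m : ℕ}
    (v : (Fin n → ℝ) → (Fin m → ℝ) → (Fin n → ℝ))
    (F : (Fin n → ℝ) → (Fin m → ℝ))
    (hv : ContDiff ℝ 1 (fun p : (Fin n → ℝ) × (Fin m → ℝ) => v p.1 p.2))
    (hF : ContDiff ℝ 1 F)
    (S : (Fin n → ℝ) → (Fin m → ℝ))
    (hS : Differentiable ℝ S)
    (hFS : ∀ e, F (v e (S e)) = 0)
    (hinvFS : ∀ e, IsUnit
      ((Matrix.of fun (i : Fin m) (k : Fin n) =>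
          fderiv ℝ F (v e (S e)) (Pi.single k 1) i) *
       (Matrix.of fun (k : Fin n) (j : Fin m) =>
          fderiv ℝ (fun s => v e s k) (S e) (Pi.single j 1))))
    (hinvvE : ∀ e, IsUnit (Matrix.of fun k l : Fin n =>
      fderiv ℝ (fun e' => v e' (S e) k) e (Pi.single l 1))) :
    ∀ e,
      (Matrix.of fun i l : Fin n =>
          fderiv ℝ (fun e' => v e' (S e') i) e (Pi.single l 1)) *
      (Matrix.of fun k l : Fin n =>
          fderiv ℝ (fun e' => v e' (S e) k) e (Pi.single l 1))⁻¹ *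
      (Matrix.of fun (k : Fin n) (j : Fin m) =>
          fderiv ℝ (fun s => v e s k) (S e) (Pi.single j 1))
      = (0 : Matrix (Fin n) (Fin m) ℝ) := by
  intro e
  set L := fderiv ℝ (fun p : (Fin n → ℝ) × (Fin m → ℝ) => v p.1 p.2) (e, S e) with hLdef
  have hvd : HasFDerivAt (fun p : (Fin n → ℝ) × (Fin m → ℝ) => v p.1 p.2) L (e, S e) :=
    ((hv.differentiable one_ne_zero) (e, S e)).hasFDerivAt
  set dS := fderiv ℝ S e with hdSdef
  have hSd : HasFDerivAt S dS e := (hS e).hasFDerivAt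
  -- partial derivative in e
  have hge : HasFDerivAt (fun e' => (e', S e))
      ((ContinuousLinearMap.id ℝ (Fin n → ℝ)).prod 0) e :=
    HasFDerivAt.prodMk (hasFDerivAt_id e) (hasFDerivAt_const (S e) e)
  have hpe : HasFDerivAt (fun e' => v e' (S e))
      (L.comp ((ContinuousLinearMap.id ℝ (Fin n → ℝ)).prod 0)) e := by have := hvd.comp e hge; exact this
  -- partial derivative in s
  have hgs : HasFDerivAt (fun s : Fin m → ℝ => (e, s))
      ((0 : (Fin m → ℝ) →L[ℝ] (Fin n → ℝ)).prod (ContinuousLinearMap.id ℝ (Fin m → ℝ))) (S e) :=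
    HasFDerivAt.prodMk (hasFDerivAt_const e (S e)) (hasFDerivAt_id (S e))
  have hps : HasFDerivAt (fun s => v e s)
      (L.comp ((0 : (Fin m → ℝ) →L[ℝ] (Fin n → ℝ)).prod (ContinuousLinearMap.id ℝ (Fin m → ℝ))))
      (S e) := hvd.comp (S e) hgs
  -- total derivative
  have hgt : HasFDerivAt (fun e' => (e', S e'))
      ((ContinuousLinearMap.id ℝ (Fin n → ℝ)).prod dS) e := HasFDerivAt.prodMk (hasFDerivAt_id e) hSd
  set Dlin := L.comp ((ContinuousLinearMap.id ℝ (Fin n → ℝ)).prod dS) with hDlindef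
  have hpt : HasFDerivAt (fun e' => v e' (S e')) Dlin e := by have := hvd.comp e hgt; exact this
  -- matrices
  set A : Matrix (Fin n) (Fin n) ℝ := Matrix.of fun k l : Fin n =>
    fderiv ℝ (fun e' => v e' (S e) k) e (Pi.single l 1) with hAdef
  set D : Matrix (Fin n) (Fin n) ℝ := Matrix.of fun i l : Fin n =>
    fderiv ℝ (fun e' => v e' (S e') i) e (Pi.single l 1) with hDdef
  set B : Matrix (Fin n) (Fin m) ℝ := Matrix.of fun (k : Fin n) (j : Fin m) =>
    fderiv ℝ (fun s => v e s k) (S e) (Pi.single j 1) with hBdef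
  set C : Matrix (Fin m) (Fin n) ℝ := Matrix.of fun (i : Fin m) (k : Fin n) =>
    fderiv ℝ F (v e (S e)) (Pi.single k 1) i with hCdef
  set P : Matrix (Fin m) (Fin n) ℝ := Matrix.of fun (j : Fin m) (l : Fin n) =>
    dS (Pi.single l 1) j with hPdef
  -- entries
  have hAe : ∀ k l : Fin n, A k l = L (Pi.single l 1, 0) k := by
    intro k l
    have h : HasFDerivAt (fun e' => v e' (S e) k)
        ((ContinuousLinearMap.proj k).comp
          (L.comp ((ContinuousLinearMap.id ℝ (Fin n → ℝ)).prod 0))) e :=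
      (ContinuousLinearMap.proj (R := ℝ) (φ := fun _ : Fin n => ℝ) k).hasFDerivAt.comp e hpe
    show fderiv ℝ (fun e' => v e' (S e) k) e (Pi.single l 1) = _
    rw [h.fderiv]
    simp
  have hBe : ∀ (k : Fin n) (j : Fin m), B k j = L (0, Pi.single j 1) k := by
    intro k j
    have h : HasFDerivAt (fun s => v e s k)
        ((ContinuousLinearMap.proj k).comp
          (L.comp ((0 : (Fin m → ℝ) →L[ℝ] (Fin n → ℝ)).prod
            (ContinuousLinearMap.id ℝ (Fin m → ℝ))))) (S e) :=
      (ContinuousLinearMap.proj (R := ℝ) (φ := fun _ : Fin n => ℝ) k).hasFDerivAt.comp (S e) hps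
    show fderiv ℝ (fun s => v e s k) (S e) (Pi.single j 1) = _
    rw [h.fderiv]
    simp
  have hDe : ∀ i l : Fin n, D i l = Dlin (Pi.single l 1) i := by
    intro i l
    have h : HasFDerivAt (fun e' => v e' (S e') i)
        ((ContinuousLinearMap.proj i).comp Dlin) e :=
      (ContinuousLinearMap.proj (R := ℝ) (φ := fun _ : Fin n => ℝ) i).hasFDerivAt.comp e hpt
    show fderiv ℝ (fun e' => v e' (S e') i) e (Pi.single l 1) = _
    rw [h.fderiv]
    simp
  -- D = A + B * P
  have hDAB : D = A + B * P := by
    ext i l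
    have h1 : Dlin (Pi.single l 1) = L (Pi.single l 1, dS (Pi.single l 1)) := rfl
    have h2 : (Pi.single l 1, dS (Pi.single l 1)) =
        ((Pi.single l 1 : Fin n → ℝ), (0 : Fin m → ℝ)) + ((0 : Fin n → ℝ), dS (Pi.single l 1)) := by
      simp
    have h3 : L ((0 : Fin n → ℝ), dS (Pi.single l 1)) i
        = ∑ j, dS (Pi.single l 1) j * L (0, Pi.single j 1) i := by
      have hM : ∀ u : Fin m → ℝ, L ((0 : Fin n → ℝ), u) =
          (L.comp (ContinuousLinearMap.inr ℝ (Fin n → ℝ) (Fin m → ℝ))) u := by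
        intro u; simp
      rw [hM, clm_eq_sum]
      simp [Finset.sum_apply, ContinuousLinearMap.comp_apply, ContinuousLinearMap.inr_apply]
    rw [hDe i l, h1, h2, map_add]
    simp only [Matrix.add_apply, Matrix.mul_apply, Pi.add_apply]
    rw [hAe i l, h3]
    congr 1
    apply Finset.sum_congr rfl
    intro j _
    rw [hBe i j]
    simp [hPdef, mul_comm]
  -- C * D = 0
  have hCD : C * D = 0 := by
    set dF := fderiv ℝ F (v e (S e)) with hdFdef
    have hFd : HasFDerivAt F dF (v e (S e)) := ((hF.differentiable one_ne_zero) _).hasFDerivAt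
    have hcomp : HasFDerivAt (fun e' => F (v e' (S e'))) (dF.comp Dlin) e := hFd.comp e hpt
    have hconst : (fun e' => F (v e' (S e'))) = fun _ => (0 : Fin m → ℝ) := funext hFS
    have h0 : HasFDerivAt (𝕜 := ℝ) (fun e' => F (v e' (S e'))) 0 e := by
      rw [hconst]; exact hasFDerivAt_const 0 e
    have hz : dF.comp Dlin = 0 := hcomp.unique h0
    ext i l
    simp only [Matrix.mul_apply, Matrix.zero_apply]
    have : ∀ k, C i k * D k l = Dlin (Pi.single l 1) k * dF (Pi.single k 1) i := by
      intro k
      rw [hDe k l]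
      simp [hCdef, mul_comm]
    rw [Finset.sum_congr rfl (fun k _ => this k)]
    have hs : dF (Dlin (Pi.single l 1)) i
        = ∑ k, Dlin (Pi.single l 1) k * dF (Pi.single k 1) i := by
      rw [clm_eq_sum dF (Dlin (Pi.single l 1))]
      simp [Finset.sum_apply]
    rw [← hs]
    have : dF (Dlin (Pi.single l 1)) = (dF.comp Dlin) (Pi.single l 1) := rfl
    rw [this, hz]
    simp
  exact matrix_key A D B C P hDAB hCD (hinvFS e) (hinvvE e)
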